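/- Let π be a noncrossing partition of {1,...,n} and K(π) its Kreweras complement. Then |π| + |K(π)| = n + 1, where |·| denotes the number of blocks. -/

import Mathlib

open Finset

/-- `x` and `y` lie in the same block of the partition `π`. -/
def SameBlock {α : Type*} [DecidableEq α] {s : Finset α} (π : Finpartition s)
    (x y : α) : Prop :=
  ∃ B ∈ π.parts, x ∈ B ∧ y ∈ B

/-- A partition of `{1,…,n}` (modelled on `Fin n`) is noncrossing if whenever
`a < b < c < d` with `a,c` in one block and `b,d` in one block, all four lie in a
common block. -/
def Noncrossing {n : ℕ} (π : Finpartition (univ : Finset (Fin n))) : Prop :=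
  ∀ a b c d : Fin n, a < b → b < c → c < d →
    SameBlock π a c → SameBlock π b d → SameBlock π a b

/-- The position of a point in the interleaved sequence `1,1',2,2',…,n,n'`:
`(i, false)` is the point `i+1` and `(i, true)` is the primed point `(i+1)'`. -/
def interPos {n : ℕ} (x : Fin n × Bool) : ℕ :=
  2 * x.1.val + (if x.2 then 1 else 0)

/-- Same-block relation for the union of a partition `π` of the unprimed points with a
partition `κ` of the primed points. -/
def UnionRel {n : ℕ} (π κ : Finpartition (univ : Finset (Fin n)))
    (x y : Fin n × Bool) : Prop :=
  x.2 = y.2 ∧ (if x.2 = true then SameBlock κ x.1 y.1 else SameBlock π x.1 y.1)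

/-- `π ∪ κ` is a noncrossing partition of the interleaved points `1,1',2,2',…,n,n'`. -/
def UnionNoncrossing {n : ℕ} (π κ : Finpartition (univ : Finset (Fin n))) : Prop :=
  ∀ a b c d : Fin n × Bool,
    interPos a < interPos b → interPos b < interPos c → interPos c < interPos d →
    UnionRel π κ a c → UnionRel π κ b d → UnionRel π κ a b

/-- `κ` is the Kreweras complement of `π`: it is the maximal partition of the primed
points `1',…,n'` such that `π ∪ κ` is noncrossing on the interleaved points. -/
def IsKreweras {n : ℕ} (π κ : Finpartition (univ : Finset (Fin n))) : Prop :=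
  UnionNoncrossing π κ ∧
    ∀ κ' : Finpartition (univ : Finset (Fin n)), UnionNoncrossing π κ' → κ' ≤ κ

namespace Krew
variable {n : ℕ}
instance {α : Type*} [DecidableEq α] {s : Finset α} (π : Finpartition s) (x y : α) :
    Decidable (SameBlock π x y) := by unfold SameBlock; infer_instance

variable {n : ℕ}
def Ival (i j x : Fin n) : Prop :=
  (i.val < x.val ∧ x.val ≤ j.val) ∨ (j.val < x.val ∧ x.val ≤ i.val)
instance (i j x : Fin n) : Decidable (Ival i j x) := by unfold Ival; infer_instance
def KR (π : Finpartition (univ : Finset (Fin n))) (i j : Fin n) : Prop :=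
  ∀ B ∈ π.parts, (∀ x ∈ B, Ival i j x) ∨ (∀ x ∈ B, ¬ Ival i j x)
instance (π : Finpartition (univ : Finset (Fin n))) (i j : Fin n) :
    Decidable (KR π i j) := by unfold KR; infer_instance
theorem KR_refl (π : Finpartition (univ : Finset (Fin n))) (i : Fin n) : KR π i i := by
  intro B _; right; intro x _; unfold Ival; omega
theorem KR_symm {π : Finpartition (univ : Finset (Fin n))} {i j : Fin n}
    (h : KR π i j) : KR π j i := by
  intro B hB
  rcases h B hB with h' | h'
  · left; intro x hx; have := h' x hx; unfold Ival at *; omega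
  · right; intro x hx; have := h' x hx; unfold Ival at *; omega
theorem KR_trans {π : Finpartition (univ : Finset (Fin n))} {i j k : Fin n}
    (h1 : KR π i j) (h2 : KR π j k) : KR π i k := by
  intro B hB
  rcases h1 B hB with h | h <;> rcases h2 B hB with h' | h'
  · right; intro x hx; have := h x hx; have := h' x hx; unfold Ival at *; omega
  · left; intro x hx; have := h x hx; have := h' x hx; unfold Ival at *; omega
  · left; intro x hx; have := h x hx; have := h' x hx; unfold Ival at *; omega
  · right; intro x hx; have := h x hx; have := h' x hx; unfold Ival at *; omega
def KRS (π : Finpartition (univ : Finset (Fin n))) : Setoid (Fin n) :=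
  ⟨KR π, fun i => KR_refl π i, KR_symm, KR_trans⟩
instance (π : Finpartition (univ : Finset (Fin n))) : DecidableRel (KRS π).r :=
  fun i j => by unfold KRS; simpa using inferInstanceAs (Decidable (KR π i j))
def kk (π : Finpartition (univ : Finset (Fin n))) : Finpartition (univ : Finset (Fin n)) :=
  Finpartition.ofSetoid (KRS π)
theorem sameBlock_kk {π : Finpartition (univ : Finset (Fin n))} {x y : Fin n} :
    SameBlock (kk π) x y ↔ KR π x y := by
  constructor
  · rintro ⟨B, hB, hx, hy⟩
    have hpart : (kk π).part x = B := (kk π).part_eq_of_mem hB hx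
    have : y ∈ (kk π).part x := hpart ▸ hy
    exact Finpartition.mem_part_ofSetoid_iff_rel.mp this
  · intro h
    refine ⟨(kk π).part x, (kk π).part_mem.mpr (mem_univ x), (kk π).mem_part (mem_univ x), ?_⟩
    exact Finpartition.mem_part_ofSetoid_iff_rel.mpr h
theorem KR_cross {π : Finpartition (univ : Finset (Fin n))} {a b c d : Fin n}
    (hab : a < b) (hbc : b < c) (hcd : c < d)
    (h1 : KR π a c) (h2 : KR π b d) : KR π a b := by
  have hab' : a.val < b.val := hab
  have hbc' : b.val < c.val := hbc
  have hcd' : c.val < d.val := hcd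
  intro B hB
  rcases h1 B hB with h | h <;> rcases h2 B hB with h' | h'
  · right; intro x hx; have := h x hx; have := h' x hx; unfold Ival at *; omega
  · left; intro x hx; have := h x hx; have := h' x hx; unfold Ival at *; omega
  · right; intro x hx; have := h x hx; have := h' x hx; unfold Ival at *; omega
  · right; intro x hx; have := h x hx; have := h' x hx; unfold Ival at *; omega

theorem union_nc_kk {π : Finpartition (univ : Finset (Fin n))} (hπ : Noncrossing π) :
    UnionNoncrossing π (kk π) := by
  rintro ⟨a1, a2⟩ ⟨b1, b2⟩ ⟨c1, c2⟩ ⟨d1, d2⟩ p1 p2 p3 ⟨eac, sac⟩ ⟨ebd, sbd⟩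
  simp only at eac ebd sac sbd
  subst eac; subst ebd
  cases a2 <;> cases b2 <;> simp only [if_true, if_false, Bool.false_eq_true, if_neg,
    reduceIte] at sac sbd ⊢
  · -- all unprimed
    refine ⟨rfl, ?_⟩
    simp only [interPos, if_neg] at p1 p2 p3
    exact hπ a1 b1 c1 d1 (by simp at p1 ⊢; omega) (by simp at p2 ⊢; omega)
      (by simp at p3 ⊢; omega) sac sbd
  · -- a,c unprimed; b,d primed : contradiction
    exfalso
    simp only [interPos] at p1 p2 p3
    have h1 : a1.val ≤ b1.val := by simp at p1; omega
    have h2 : b1.val < c1.val := by simp at p2; omega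
    have h3 : c1.val ≤ d1.val := by simp at p3; omega
    obtain ⟨B, hB, haB, hcB⟩ := sac
    have hR : KR π b1 d1 := sameBlock_kk.mp sbd
    rcases hR B hB with h | h
    · have := h a1 haB; unfold Ival at this; omega
    · have := h c1 hcB; unfold Ival at this; omega
  · -- a,c primed; b,d unprimed : contradiction
    exfalso
    simp only [interPos] at p1 p2 p3
    have h1 : a1.val < b1.val := by simp at p1; omega
    have h2 : b1.val ≤ c1.val := by simp at p2; omega
    have h3 : c1.val < d1.val := by simp at p3; omega
    obtain ⟨B, hB, hbB, hdB⟩ := sbd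
    have hR : KR π a1 c1 := sameBlock_kk.mp sac
    rcases hR B hB with h | h
    · have := h d1 hdB; unfold Ival at this; omega
    · have := h b1 hbB; unfold Ival at this; omega
  · -- all primed
    refine ⟨rfl, ?_⟩
    simp only [interPos] at p1 p2 p3
    have h1 : a1 < b1 := by simp at p1 ⊢; omega
    have h2 : b1 < c1 := by simp at p2 ⊢; omega
    have h3 : c1 < d1 := by simp at p3 ⊢; omega
    exact sameBlock_kk.mpr (KR_cross h1 h2 h3 (sameBlock_kk.mp sac) (sameBlock_kk.mp sbd))
/-- any partition whose union with `π` is noncrossing refines the KR relation -/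
theorem KR_of_sameBlock {π κ : Finpartition (univ : Finset (Fin n))}
    (hun : UnionNoncrossing π κ) {x y : Fin n} (h : SameBlock κ x y) : KR π x y := by
  -- wlog x < y
  have core : ∀ x y : Fin n, x < y → SameBlock κ x y → KR π x y := by
    intro x y hxy h B hB
    by_contra hc
    rw [not_or] at hc
    obtain ⟨h1, h2⟩ := hc
    push_neg at h1 h2
    obtain ⟨e, heB, heI⟩ := h1   -- e inside fails? no: h1 : ∃ x ∈ B, ¬ Ival
    obtain ⟨c, hcB, hcI⟩ := h2   -- c with Ival
    have hxy' : x.val < y.val := hxy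
    have hcI' : x.val < c.val ∧ c.val ≤ y.val := by unfold Ival at hcI; omega
    have heI' : e.val ≤ x.val ∨ y.val < e.val := by unfold Ival at heI; omega
    rcases heI' with he | he
    · have := hun (e, false) (x, true) (c, false) (y, true)
        (by simp [interPos]; omega) (by simp [interPos]; omega) (by simp [interPos]; omega)
        ⟨rfl, by simpa using ⟨B, hB, heB, hcB⟩⟩ ⟨rfl, by simpa using h⟩
      simpa using this.1
    · have := hun (x, true) (c, false) (y, true) (e, false)
        (by simp [interPos]; omega) (by simp [interPos]; omega) (by simp [interPos]; omega)
        ⟨rfl, by simpa using h⟩ ⟨rfl, by simpa using ⟨B, hB, hcB, heB⟩⟩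
      simpa using this.1
  rcases lt_trichotomy x y with hlt | heq | hgt
  · exact core x y hlt h
  · subst heq; exact KR_refl π x
  · exact KR_symm (core y x hgt ⟨h.choose, h.choose_spec.1, h.choose_spec.2.2, h.choose_spec.2.1⟩)

theorem card_parts_eq_min (P : Finpartition (univ : Finset (Fin n))) :
    P.parts.card = (univ.filter (fun j : Fin n => ∀ i, SameBlock P i j → j ≤ i)).card := by
  apply Finset.card_bij (fun B hB => B.min' (P.nonempty_of_mem_parts hB))
  · intro B hB
    simp only [mem_filter, mem_univ, true_and]
    rintro i ⟨C, hC, hiC, hmC⟩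
    have hCB : C = B := P.eq_of_mem_parts hC hB hmC (B.min'_mem _)
    subst hCB
    exact Finset.min'_le _ i hiC
  · intro B hB B' hB' h
    apply P.eq_of_mem_parts hB hB' (B.min'_mem _)
    rw [h]; exact B'.min'_mem _
  · intro j hj
    simp only [mem_filter, mem_univ, true_and] at hj
    obtain ⟨B, hB, hjB⟩ := P.exists_mem (mem_univ j)
    exact ⟨B, hB, le_antisymm (Finset.min'_le B j hjB) (hj _ ⟨B, hB, B.min'_mem _, hjB⟩)⟩

theorem card_parts_eq_max (P : Finpartition (univ : Finset (Fin n))) :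
    P.parts.card = (univ.filter (fun j : Fin n => ∀ k, SameBlock P j k → k ≤ j)).card := by
  apply Finset.card_bij (fun B hB => B.max' (P.nonempty_of_mem_parts hB))
  · intro B hB
    simp only [mem_filter, mem_univ, true_and]
    rintro k ⟨C, hC, hmC, hkC⟩
    have hCB : C = B := P.eq_of_mem_parts hC hB hmC (B.max'_mem _)
    subst hCB
    exact Finset.le_max' _ k hkC
  · intro B hB B' hB' h
    apply P.eq_of_mem_parts hB hB' (B.max'_mem _)
    rw [h]; exact B'.max'_mem _
  · intro j hj
    simp only [mem_filter, mem_univ, true_and] at hj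
    obtain ⟨B, hB, hjB⟩ := P.exists_mem (mem_univ j)
    exact ⟨B, hB, le_antisymm (hj _ ⟨B, hB, hjB, B.max'_mem _⟩) (Finset.le_max' B j hjB)⟩

theorem val_add_one [NeZero n] {i : Fin n} (hi : i.val + 1 < n) :
    (i + 1).val = i.val + 1 := by
  have h1 : (1 : Fin n).val = 1 := by
    rw [Fin.val_one']; exact Nat.mod_eq_of_lt (by omega)
  rw [Fin.val_add, h1]
  exact Nat.mod_eq_of_lt hi

theorem key [NeZero n] {π : Finpartition (univ : Finset (Fin n))} (hπ : Noncrossing π)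
    (i : Fin n) (hi : i.val + 1 < n) :
    (∀ m, SameBlock π m (i + 1) → (i + 1) ≤ m) ↔ ∃ k, i < k ∧ KR π i k := by
  have hv : (i + 1).val = i.val + 1 := val_add_one hi
  constructor
  · intro h
    obtain ⟨B, hB, hmem⟩ := π.exists_mem (mem_univ (i + 1))
    have hne := π.nonempty_of_mem_parts hB
    set k := B.max' hne with hk
    have hkB : k ∈ B := B.max'_mem hne
    have hik' : i.val < k.val := by
      have := Finset.le_max' B _ hmem
      simp only [Fin.le_def, hv] at this
      omega
    refine ⟨k, by rw [Fin.lt_def]; omega, ?_⟩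
    have hBsub : ∀ x ∈ B, i.val < x.val ∧ x.val ≤ k.val := by
      intro x hx
      have h1 := h x ⟨B, hB, hx, hmem⟩
      have h2 := Finset.le_max' B x hx
      simp only [Fin.le_def, hv] at h1 h2
      omega
    intro C hC
    by_contra hc
    rw [not_or] at hc
    push_neg at hc
    obtain ⟨⟨e, heC, heI⟩, ⟨c, hcC, hcI⟩⟩ := hc
    have hCB : C ≠ B := by
      intro hEq; subst hEq
      exact heI (Or.inl (hBsub e heC))
    have hcB : c ∉ B := fun hcB => hCB (π.eq_of_mem_parts hC hB hcC hcB)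
    have hcI' : i.val < c.val ∧ c.val ≤ k.val := by unfold Ival at hcI; omega
    have hcne1 : c.val ≠ i.val + 1 := by
      intro hEq
      exact hcB (by
        have : c = i + 1 := Fin.ext (by omega)
        rw [this]; exact hmem)
    have hcnek : c.val ≠ k.val := by
      intro hEq
      exact hcB (by have : c = k := Fin.ext hEq; rw [this]; exact hkB)
    have heI' : e.val ≤ i.val ∨ k.val < e.val := by unfold Ival at heI; omega
    rcases heI' with he | he
    · have hsb := hπ e (i + 1) c k (by rw [Fin.lt_def]; omega)
        (by rw [Fin.lt_def]; omega) (by rw [Fin.lt_def]; omega)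
        ⟨C, hC, heC, hcC⟩ ⟨B, hB, hmem, hkB⟩
      have h2 := h e hsb
      simp only [Fin.le_def, hv] at h2
      omega
    · have hsb := hπ (i + 1) c k e (by rw [Fin.lt_def]; omega)
        (by rw [Fin.lt_def]; omega) (by rw [Fin.lt_def]; omega)
        ⟨B, hB, hmem, hkB⟩ ⟨C, hC, hcC, heC⟩
      obtain ⟨D, hD, hD1, hD2⟩ := hsb
      have hDB : D = B := π.eq_of_mem_parts hD hB hD1 hmem
      exact hcB (hDB ▸ hD2)
  · rintro ⟨k, hik, hR⟩
    rintro m ⟨B, hB, hmB, hj1B⟩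
    have hik' : i.val < k.val := hik
    rcases hR B hB with h | h
    · have := h m hmB
      unfold Ival at this
      simp only [Fin.le_def, hv]
      omega
    · exfalso
      have := h (i + 1) hj1B
      unfold Ival at this
      rw [hv] at this
      omega
end Krew

/-- If `π` is a noncrossing partition of `{1,…,n}` and `K(π)` its Kreweras
complement, then `|π| + |K(π)| = n + 1`, where `|·|` is the number of blocks. -/
theorem stmt7 (n : ℕ) (hn : 0 < n)
    (π κ : Finpartition (univ : Finset (Fin n)))
    (hπ : Noncrossing π) (hκ : IsKreweras π κ) :
    π.parts.card + κ.parts.card = n + 1 := by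
  haveI : NeZero n := ⟨hn.ne'⟩
  -- the relation of κ is exactly the explicit Kreweras relation
  have hRiff : ∀ x y, SameBlock κ x y ↔ Krew.KR π x y := by
    intro x y
    constructor
    · exact Krew.KR_of_sameBlock hκ.1
    · intro h
      have hle := hκ.2 (Krew.kk π) (Krew.union_nc_kk hπ)
      obtain ⟨B, hB, hx, hy⟩ := Krew.sameBlock_kk.mpr h
      obtain ⟨C, hC, hBC⟩ := hle hB
      exact ⟨C, hC, hBC hx, hBC hy⟩
  have hA : π.parts.card
      = (univ.filter (fun j : Fin n => ∀ i, SameBlock π i j → j ≤ i)).card :=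
    Krew.card_parts_eq_min π
  have hCc : κ.parts.card
      = (univ.filter (fun j : Fin n => ∀ k, Krew.KR π j k → k ≤ j)).card := by
    rw [Krew.card_parts_eq_max κ]
    congr 1
    apply Finset.filter_congr
    intro j _
    constructor
    · intro h k hk; exact h k ((hRiff j k).mpr hk)
    · intro h k hk; exact h k ((hRiff j k).mp hk)
  set T0 : Finset (Fin n) := univ.filter (fun j : Fin n => j.val ≠ 0) with hT0
  set T1 : Finset (Fin n) := univ.filter (fun j : Fin n => j.val + 1 ≠ n) with hT1
  set S1 : Finset (Fin n) := T0.filter (fun j => ∀ i, SameBlock π i j → j ≤ i) with hS1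
  set S2 : Finset (Fin n) := T1.filter (fun j => ∀ k, Krew.KR π j k → k ≤ j) with hS2
  set S3 : Finset (Fin n) := T1.filter (fun j => ¬ ∀ k, Krew.KR π j k → k ≤ j) with hS3
  -- |π.parts| = |S1| + 1
  have hA1 : π.parts.card = S1.card + 1 := by
    rw [hA]
    have : (univ.filter (fun j : Fin n => ∀ i, SameBlock π i j → j ≤ i))
        = insert ⟨0, hn⟩ S1 := by
      ext j
      simp only [hS1, hT0, mem_filter, mem_univ, true_and, mem_insert, filter_filter]
      constructor
      · intro h
        by_cases h0 : j.val = 0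
        · exact Or.inl (Fin.ext h0)
        · exact Or.inr ⟨h0, h⟩
      · rintro (rfl | ⟨_, h⟩)
        · intro i _; exact Fin.mk_le_of_le_val (Nat.zero_le _)
        · exact h
    rw [this, Finset.card_insert_of_notMem]
    simp only [hS1, hT0, mem_filter, mem_univ, true_and, filter_filter]
    intro h
    exact h.1 rfl
  -- |κ.parts| = |S2| + 1
  have hlast : (⟨n - 1, by omega⟩ : Fin n).val = n - 1 := rfl
  have hC1 : κ.parts.card = S2.card + 1 := by
    rw [hCc]
    have : (univ.filter (fun j : Fin n => ∀ k, Krew.KR π j k → k ≤ j))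
        = insert ⟨n - 1, by omega⟩ S2 := by
      ext j
      simp only [hS2, hT1, mem_filter, mem_univ, true_and, mem_insert, filter_filter]
      constructor
      · intro h
        by_cases h0 : j.val + 1 = n
        · exact Or.inl (Fin.ext (by simp [hlast]; omega))
        · exact Or.inr ⟨h0, h⟩
      · rintro (rfl | ⟨_, h⟩)
        · intro k _
          have := k.isLt
          exact Fin.le_def.mpr (by simp [hlast]; omega)
        · exact h
    rw [this, Finset.card_insert_of_notMem]
    simp only [hS2, hT1, mem_filter, mem_univ, true_and, filter_filter]
    intro h
    have := h.1
    simp [hlast] at this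
    omega
  -- |S2| + |S3| = n - 1
  have h23 : S2.card + S3.card = n - 1 := by
    rw [hS2, hS3, Finset.card_filter_add_card_filter_not]
    have : T1 = univ.erase ⟨n - 1, by omega⟩ := by
      ext j
      simp only [hT1, mem_filter, mem_univ, true_and, mem_erase, and_true]
      constructor
      · intro h hEq
        rw [hEq] at h
        simp [hlast] at h
        omega
      · intro h
        have := j.isLt
        intro hEq
        exact h (Fin.ext (by simp [hlast]; omega))
    rw [this, Finset.card_erase_of_mem (mem_univ _), Finset.card_univ, Fintype.card_fin]
  -- |S1| = |S3|, via i ↦ i + 1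
  have h13 : S3.card = S1.card := by
    apply Finset.card_bij (fun i _ => i + 1)
    · intro i hi
      simp only [hS3, hT1, mem_filter, mem_univ, true_and, filter_filter] at hi
      obtain ⟨hil, hnk⟩ := hi
      have hilt : i.val + 1 < n := by have := i.isLt; omega
      have hv := Krew.val_add_one (n := n) hilt
      simp only [hS1, hT0, mem_filter, mem_univ, true_and, filter_filter]
      refine ⟨by omega, ?_⟩
      apply (Krew.key hπ i hilt).mpr
      push_neg at hnk
      obtain ⟨k, hk1, hk2⟩ := hnk
      exact ⟨k, hk2, hk1⟩
    · intro a ha b hb h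
      exact add_right_cancel h
    · intro j hj
      simp only [hS1, hT0, mem_filter, mem_univ, true_and, filter_filter] at hj
      obtain ⟨hj0, hjm⟩ := hj
      have hjlt := j.isLt
      refine ⟨⟨j.val - 1, by omega⟩, ?_, ?_⟩
      · have hilt : (⟨j.val - 1, by omega⟩ : Fin n).val + 1 < n := by simp; omega
        have hv := Krew.val_add_one (n := n) hilt
        have hEq : (⟨j.val - 1, by omega⟩ : Fin n) + 1 = j := Fin.ext (by rw [hv]; simp; omega)
        simp only [hS3, hT1, mem_filter, mem_univ, true_and, filter_filter]
        refine ⟨by simp; omega, ?_⟩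
        intro hkm
        have := (Krew.key hπ ⟨j.val - 1, by omega⟩ hilt).mp (by rw [hEq]; exact hjm)
        obtain ⟨k, hk1, hk2⟩ := this
        exact absurd (hkm k hk2) (not_le.mpr hk1)
      · have hilt : (⟨j.val - 1, by omega⟩ : Fin n).val + 1 < n := by simp; omega
        have hv := Krew.val_add_one (n := n) hilt
        exact Fin.ext (by rw [hv]; simp; omega)
  omega
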